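/- arXiv:1409.3685 — 5 statements merged into one kernel-verified Lean document; each statement's English description precedes it below -/
import Mathlib

section
/- In the Marinatto–Weber scheme with initial state |ψ_in⟩ = (|00⟩+|01⟩)/√2 applied to the bimatrix game with payoffs (5,3),(1,1) in the top row and (1,1),(3,5) in the bottom row, the output game has payoff functions π₁(p,q) = 3p + 2(1−p) and π₂(p,q) = 2p + 3(1−p); in particular the payoffs are independent of player 2's strategy q. -/
open Matrix Kronecker

noncomputable def sigmaX : Matrix (Fin 2) (Fin 2) ℂ := !![0, 1; 1, 0]

noncomputable def MWfinal (ρin : Matrix (Fin 2 × Fin 2) (Fin 2 × Fin 2) ℂ)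
    (p q : ℝ) : Matrix (Fin 2 × Fin 2) (Fin 2 × Fin 2) ℂ :=
  ((p * q : ℝ) : ℂ) • ((1 ⊗ₖ 1) * ρin * (1 ⊗ₖ 1)) +
  ((p * (1 - q) : ℝ) : ℂ) • ((1 ⊗ₖ sigmaX) * ρin * (1 ⊗ₖ sigmaX)) +
  (((1 - p) * q : ℝ) : ℂ) • ((sigmaX ⊗ₖ 1) * ρin * (sigmaX ⊗ₖ 1)) +
  (((1 - p) * (1 - q) : ℝ) : ℂ) • ((sigmaX ⊗ₖ sigmaX) * ρin * (sigmaX ⊗ₖ sigmaX))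

/-- The initial state |ψ_in⟩ = (|00⟩ + |01⟩)/√2. -/
noncomputable def psiIn : Fin 2 × Fin 2 → ℂ :=
  fun pr => if pr.1 = 0 then (1 / Real.sqrt 2 : ℝ) else 0

/-- Player 1's payoffs of the game ((5,3),(1,1);(1,1),(3,5)). -/
def payA : Fin 2 → Fin 2 → ℝ := ![![5, 1], ![1, 3]]

/-- Player 2's payoffs. -/
def payB : Fin 2 → Fin 2 → ℝ := ![![3, 1], ![1, 5]]

lemma rho_eq : Matrix.vecMulVec psiIn (star psiIn) =
    Matrix.of (fun pr pr' : Fin 2 × Fin 2 =>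
      if pr.1 = 0 ∧ pr'.1 = 0 then (1/2 : ℂ) else 0) := by
  funext pr pr'
  simp only [Matrix.vecMulVec_apply, Pi.star_apply, psiIn, Matrix.of_apply]
  have h2 : ((Real.sqrt 2 : ℝ) : ℂ) * ((Real.sqrt 2 : ℝ) : ℂ) = 2 := by
    norm_cast; exact Real.mul_self_sqrt (by norm_num)
  by_cases h : pr.1 = 0 <;> by_cases h' : pr'.1 = 0 <;>
    simp [h, h', ← mul_inv, h2]

set_option maxHeartbeats 2000000 in
/-- for |ψ_in⟩ = (|00⟩+|01⟩)/√2, the MW output payoffs are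
π₁(p,q) = 3p + 2(1−p) and π₂(p,q) = 2p + 3(1−p), independent of q. -/
theorem stmt4 :
    ∀ p q : ℝ, p ∈ Set.Icc (0 : ℝ) 1 → q ∈ Set.Icc (0 : ℝ) 1 →
      (Matrix.diagonal (fun pr : Fin 2 × Fin 2 => (payA pr.1 pr.2 : ℂ)) *
          MWfinal (Matrix.vecMulVec psiIn (star psiIn)) p q).trace
        = ((3 * p + 2 * (1 - p) : ℝ) : ℂ) ∧
      (Matrix.diagonal (fun pr : Fin 2 × Fin 2 => (payB pr.1 pr.2 : ℂ)) *
          MWfinal (Matrix.vecMulVec psiIn (star psiIn)) p q).trace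
        = ((2 * p + 3 * (1 - p) : ℝ) : ℂ) := by
  intro p q _ _
  rw [rho_eq]
  constructor <;>
  · simp only [Matrix.trace, Matrix.diag, Matrix.mul_apply, MWfinal, sigmaX,
      payA, payB, Matrix.of_apply, Matrix.kroneckerMap_apply, Matrix.one_apply,
      Matrix.add_apply, Matrix.smul_apply, Fintype.sum_prod_type, Fin.sum_univ_two,
      Matrix.diagonal_apply, Prod.mk.injEq, Prod.ext_iff,
      Matrix.cons_val_zero, Matrix.cons_val_one, Matrix.head_cons, Matrix.head_fin_const]
    norm_num
    ring
end

section
/- In the 4×4 bimatrix game with rows/columns C×1, C×σₓ, Q×1, Q×σₓ and payoffs row 1 = (5,5),(0,4),(5,5),(0,4); row 2 = (4,0),(2,2),(4,0),(2,2); row 3 = (5,5),(0,4),(2,2),(4,0); row 4 = (4,0),(2,2),(0,4),(5,5), the profile (Q×σₓ, Q×σₓ) is a pure Nash equilibrium with payoff (5,5), while (Q×1, Q×1) is not a Nash equilibrium. -/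
/-- Pure Nash equilibrium of a bimatrix game. -/
def IsNash {m n : Type*} (A B : m → n → ℝ) (s : m × n) : Prop :=
  (∀ s₁' : m, A s₁' s.2 ≤ A s.1 s.2) ∧ (∀ s₂' : n, B s.1 s₂' ≤ B s.1 s.2)

/-- In the eMW game obtained from ((5,5),(0,4);(4,0),(2,2)) with
|ψ_in⟩ = |11⟩ (strategies ordered C×1, C×σₓ, Q×1, Q×σₓ), (Q×σₓ, Q×σₓ) is a
pure Nash equilibrium with payoff (5,5), while (Q×1, Q×1) is not. -/
theorem stmt9 (A B : Fin 4 → Fin 4 → ℝ)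
    (hA : A = ![![5, 0, 5, 0], ![4, 2, 4, 2], ![5, 0, 2, 4], ![4, 2, 0, 5]])
    (hB : B = ![![5, 4, 5, 4], ![0, 2, 0, 2], ![5, 4, 2, 0], ![0, 2, 4, 5]]) :
    IsNash A B (3, 3) ∧ A 3 3 = 5 ∧ B 3 3 = 5 ∧ ¬ IsNash A B (2, 2) := by
  subst hA hB
  refine ⟨⟨fun s => ?_, fun s => ?_⟩, by rfl, by rfl, fun h => ?_⟩
  · fin_cases s <;> simp [IsNash, Matrix.vecHead, Matrix.vecTail] <;> norm_num
  · fin_cases s <;> simp [IsNash, Matrix.vecHead, Matrix.vecTail] <;> norm_num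
  · have := h.1 0
    simp [Matrix.vecHead, Matrix.vecTail] at this
    norm_num at this
end

section
/- Let η₀₀, η₀₁, η₁₀, η₁₁ ≥ 0 with η₀₀+η₀₁+η₁₀+η₁₁ = 1. If the three equations (2+η₁₀)η₀₁ = (1+η₀₀)η₁₁, (2+η₀₁)η₁₀ = (1+η₀₀)η₁₁, and (3+η₀₀)η₁₁ = η₀₁η₁₀ all hold, then η₀₀ = 1 (and hence η₀₁ = η₁₀ = η₁₁ = 0). -/
/-- nonnegative η's summing to 1 satisfying the three
separability equations force η₀₀ = 1 and the rest to vanish. -/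
theorem stmt13 (η₀₀ η₀₁ η₁₀ η₁₁ : ℝ)
    (h₀₀ : 0 ≤ η₀₀) (h₀₁ : 0 ≤ η₀₁) (h₁₀ : 0 ≤ η₁₀) (h₁₁ : 0 ≤ η₁₁)
    (hsum : η₀₀ + η₀₁ + η₁₀ + η₁₁ = 1)
    (e1 : (2 + η₁₀) * η₀₁ = (1 + η₀₀) * η₁₁)
    (e2 : (2 + η₀₁) * η₁₀ = (1 + η₀₀) * η₁₁)
    (e3 : (3 + η₀₀) * η₁₁ = η₀₁ * η₁₀) :
    η₀₀ = 1 ∧ η₀₁ = 0 ∧ η₁₀ = 0 ∧ η₁₁ = 0 := by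
  have ha : η₀₁ ≤ η₁₁ := by nlinarith
  have hb : η₁₀ ≤ η₁₁ := by nlinarith
  have hc : η₁₁ = 0 := by nlinarith [mul_le_mul ha hb h₁₀ h₁₁]
  have hd : η₀₁ = 0 := by nlinarith
  have he : η₁₀ = 0 := by nlinarith
  refine ⟨by linarith, hd, he, hc⟩
end

section
/- If |ψ_in⟩ = |00⟩, then in the eMW 4×4 game (\ref{4x4}) the strategies C×1 and Q×1 are equivalent (induce identical payoff pairs against every pure strategy of the opponent), and likewise C×σₓ and Q×σₓ are equivalent; the resulting quotient game equals the classical input 2×2 game. -/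
/-- if |ψ_in⟩ = |00⟩ then in the eMW 4×4 game the strategies
C×s and Q×s (s ∈ {1, σₓ}) are equivalent — they induce the same payoff pair
against every pure strategy of the opponent — and every payoff of the 4×4
game coincides with the corresponding classical payoff, so the quotient game
is the classical input 2×2 game.  Strategies of the 4×4 game are pairs
(c, s) ∈ Fin 2 × Fin 2, with c = 0 meaning `C` and c = 1 meaning `Q`. -/
theorem stmt18 (a b : Fin 2 → Fin 2 → ℝ)
    (l : Fin 2 → Fin 2 → ℂ) (hl : l = fun i j => if i = 0 ∧ j = 0 then 1 else 0)
    (αq βq : Fin 2 → Fin 2 → ℝ)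
    (hαq : αq = fun k m => ∑ i : Fin 2, ∑ j : Fin 2, ‖l (i + k) (j + m)‖ ^ 2 * a i j)
    (hβq : βq = fun k m => ∑ i : Fin 2, ∑ j : Fin 2, ‖l (i + k) (j + m)‖ ^ 2 * b i j)
    (A4 B4 : Fin 2 × Fin 2 → Fin 2 × Fin 2 → ℝ)
    (hA4 : A4 = fun s t => if s.1 = 1 ∧ t.1 = 1 then αq s.2 t.2 else a s.2 t.2)
    (hB4 : B4 = fun s t => if s.1 = 1 ∧ t.1 = 1 then βq s.2 t.2 else b s.2 t.2) :
    (∀ (s : Fin 2) (t : Fin 2 × Fin 2),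
        A4 (0, s) t = A4 (1, s) t ∧ B4 (0, s) t = B4 (1, s) t) ∧
    (∀ (s : Fin 2) (t : Fin 2 × Fin 2),
        A4 t (0, s) = A4 t (1, s) ∧ B4 t (0, s) = B4 t (1, s)) ∧
    (∀ s t : Fin 2 × Fin 2, A4 s t = a s.2 t.2 ∧ B4 s t = b s.2 t.2) := by
  subst hl hαq hβq hA4 hB4
  refine ⟨?_, ?_, ?_⟩ <;> intro s t
  · rcases t with ⟨c, d⟩
    fin_cases s <;> fin_cases c <;> fin_cases d <;>
      constructor <;> simp [Fin.sum_univ_two]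
  · rcases t with ⟨c, d⟩
    fin_cases s <;> fin_cases c <;> fin_cases d <;>
      constructor <;> simp [Fin.sum_univ_two]
  · rcases s with ⟨c, d⟩; rcases t with ⟨e, f⟩
    fin_cases c <;> fin_cases d <;> fin_cases e <;> fin_cases f <;>
      constructor <;> simp [Fin.sum_univ_two]
end

section
/- In the Marinatto–Weber scheme applied to Battle of the Sexes with payoffs (α,β),(γ,γ);(γ,γ),(β,α) (α>β>γ) and |ψ_in⟩ = (|00⟩+|11⟩)/√2, both profiles (p,q) = (1,1) and (p,q) = (0,0) are Nash equilibria of the output game, each giving both players payoff (α+β)/2. -/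
/-- in the MW output game for Battle of the Sexes with
|ψ_in⟩ = (|00⟩+|11⟩)/√2, where
π₁(p,q) = π₂(p,q) = (pq + (1−p)(1−q))·(α+β)/2 + (p(1−q) + (1−p)q)·γ,
both (1,1) and (0,0) are Nash equilibria giving each player (α+β)/2. -/
theorem stmt19 (α β γ : ℝ) (h1 : α > β) (h2 : β > γ)
    (π₁ π₂ : ℝ → ℝ → ℝ)
    (hπ₁ : π₁ = fun p q => p * q * ((α + β) / 2) + p * (1 - q) * γ +
                  (1 - p) * q * γ + (1 - p) * (1 - q) * ((α + β) / 2))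
    (hπ₂ : π₂ = fun p q => p * q * ((α + β) / 2) + p * (1 - q) * γ +
                  (1 - p) * q * γ + (1 - p) * (1 - q) * ((α + β) / 2)) :
    ((∀ p' ∈ Set.Icc (0 : ℝ) 1, π₁ p' 1 ≤ π₁ 1 1) ∧
     (∀ q' ∈ Set.Icc (0 : ℝ) 1, π₂ 1 q' ≤ π₂ 1 1)) ∧
    ((∀ p' ∈ Set.Icc (0 : ℝ) 1, π₁ p' 0 ≤ π₁ 0 0) ∧
     (∀ q' ∈ Set.Icc (0 : ℝ) 1, π₂ 0 q' ≤ π₂ 0 0)) ∧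
    π₁ 1 1 = (α + β) / 2 ∧ π₂ 1 1 = (α + β) / 2 ∧
    π₁ 0 0 = (α + β) / 2 ∧ π₂ 0 0 = (α + β) / 2 := by
  subst hπ₁ hπ₂
  simp only [Set.mem_Icc]
  refine ⟨⟨fun p' ⟨h0, hle⟩ => ?_, fun q' ⟨h0, hle⟩ => ?_⟩,
    ⟨fun p' ⟨h0, hle⟩ => ?_, fun q' ⟨h0, hle⟩ => ?_⟩, by ring, by ring, by ring, by ring⟩ <;>
    nlinarith [mul_nonneg h0 (sub_nonneg.2 hle)]
end
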